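/- Let A_0 = 1, B_0 = 1 be words over {1, −1}, and define recursively A_{n+1} = A_n B_n and B_{n+1} = B_n f_n(A_n), where f_n ∈ {1, −1} and f(W) multiplies each letter of W by f. Let (a(n))_{n≥0} be the limit word lim A_n. Then for all n ≥ 0 and 0 ≤ j ≤ 2^n − 1: a(j + 2^n + 2^{n+1}) = f_n · a(j) and a(j + 2^n) = a(j + 2^{n+1}). -/

import Mathlib

/-- The pair of words `(A n, B n)` over `{1, -1} ⊆ ℤ` defined by `A 0 = B 0 = [1]`,
`A (n+1) = A n ++ B n`, `B (n+1) = B n ++ f n • (A n)`. -/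
def recWord (f : ℕ → ℤ) : ℕ → List ℤ × List ℤ
  | 0 => ([1], [1])
  | n + 1 => ((recWord f n).1 ++ (recWord f n).2,
      (recWord f n).2 ++ (recWord f n).1.map (fun x => f n * x))

/-- The limit word `a = lim A n`: since `A (n+1)` begins with `A n` and `A m` has length
`2 ^ m > n` for `m = n + 1`, the `n`-th letter is well-defined. -/
def recWordLimit (f : ℕ → ℤ) (n : ℕ) : ℤ := ((recWord f (n + 1)).1).getD n 1

lemma recWord_len (f : ℕ → ℤ) : ∀ n, (recWord f n).1.length = 2 ^ n ∧ (recWord f n).2.length = 2 ^ n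
  | 0 => by simp [recWord]
  | n + 1 => by
    have ih := recWord_len f n
    simp only [recWord, List.length_append, List.length_map, ih.1, ih.2, pow_succ]
    omega

lemma recWord_prefix (f : ℕ → ℤ) : ∀ m m', m ≤ m' → (recWord f m).1 <+: (recWord f m').1 := by
  intro m m' h
  induction h with
  | refl => exact List.prefix_refl _
  | step h ih => exact ih.trans ⟨_, rfl⟩

lemma recWordLimit_eq (f : ℕ → ℤ) (m k : ℕ) (hk : k < 2 ^ m) :
    recWordLimit f k = (recWord f m).1.getD k 1 := by
  have key : ∀ a b : ℕ, a ≤ b → k < 2 ^ a →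
      (recWord f a).1.getD k 1 = (recWord f b).1.getD k 1 := by
    intro a b hab hka
    obtain ⟨t, ht⟩ := recWord_prefix f a b hab
    rw [← ht, List.getD_append _ _ _ _ (by rw [(recWord_len f a).1]; exact hka)]
  have hk1 : k < 2 ^ (k + 1) := by
    have h : k < 2 ^ k := Nat.lt_two_pow_self
    have h2 : 2 ^ (k + 1) = 2 * 2 ^ k := by rw [pow_succ]; ring
    omega
  rcases le_total m (k + 1) with h | h
  · exact (key m (k + 1) h hk).symm
  · exact key (k + 1) m h hk1

/-- The limit word of the recursion `A (n+1) = A n B n`, `B (n+1) = B n fₙ(A n)` satisfies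
`a (j + 2^n + 2^(n+1)) = f n * a j` and `a (j + 2^n) = a (j + 2^(n+1))` for `j < 2^n`. -/
theorem recWordLimit_recurrence (f : ℕ → ℤ) (hf : ∀ n, f n = 1 ∨ f n = -1) (n : ℕ)
    (j : ℕ) (hj : j < 2 ^ n) :
    recWordLimit f (j + 2 ^ n + 2 ^ (n + 1)) = f n * recWordLimit f j ∧
    recWordLimit f (j + 2 ^ n) = recWordLimit f (j + 2 ^ (n + 1)) := by
  set A := (recWord f n).1 with hA
  set B := (recWord f n).2 with hB
  set M := A.map (fun x => f n * x) with hM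
  have lA : A.length = 2 ^ n := (recWord_len f n).1
  have lB : B.length = 2 ^ n := (recWord_len f n).2
  have lM : M.length = 2 ^ n := by rw [hM, List.length_map, lA]
  have h2 : 2 ^ (n + 1) = 2 ^ n + 2 ^ n := by ring
  have h22 : 2 ^ (n + 2) = 2 ^ n + 2 ^ n + 2 ^ n + 2 ^ n := by ring
  have hA2 : (recWord f (n + 2)).1 = A ++ (B ++ (B ++ M)) := by
    simp [recWord, ← hA, ← hB, ← hM]
  have v0 : (A ++ (B ++ (B ++ M))).getD (j + 2 ^ n + 2 ^ (n + 1)) 1 = M.getD j 1 := by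
    rw [List.getD_append_right _ _ _ _ (by omega),
        List.getD_append_right _ _ _ _ (by omega),
        List.getD_append_right _ _ _ _ (by omega)]
    congr 1; omega
  have v1 : (A ++ (B ++ (B ++ M))).getD (j + 2 ^ n) 1 = B.getD j 1 := by
    rw [List.getD_append_right _ _ _ _ (by omega),
        List.getD_append _ _ _ _ (by omega)]
    congr 1; omega
  have v2 : (A ++ (B ++ (B ++ M))).getD (j + 2 ^ (n + 1)) 1 = B.getD j 1 := by
    rw [List.getD_append_right _ _ _ _ (by omega),
        List.getD_append_right _ _ _ _ (by omega),
        List.getD_append _ _ _ _ (by omega)]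
    congr 1; omega
  have vM : M.getD j 1 = f n * A.getD j 1 := by
    have hjA : j < A.length := lA ▸ hj
    have hjM : j < M.length := lM ▸ hj
    rw [List.getD_eq_getElem M 1 hjM, List.getD_eq_getElem A 1 hjA]
    simp only [hM, List.getElem_map]
  constructor
  · rw [recWordLimit_eq f (n + 2) _ (by omega), recWordLimit_eq f n j hj, hA2, v0, vM]
  · rw [recWordLimit_eq f (n + 2) _ (by omega), recWordLimit_eq f (n + 2) _ (by omega),
        hA2, v1, v2]
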